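/- Let (X,d) be a bounded metric space with Samuel compactification (S(X), τ, ∂). Suppose (a_n) is a sequence in S(X) and δ > 0 is such that ∂(a_n, a_m) > δ for all n ≠ m. Then for every ε with 0 < ε < δ/2 there exist a subsequence (b_n) of (a_n) and τ-open sets (U_n) in S(X) such that b_n ∈ U_n for all n and ∂(U_n, U_m) ≥ ε for all n ≠ m. -/

import Mathlib

open scoped BoundedContinuousFunction
noncomputable section

variable (X : Type*) [MetricSpace X]

/-- The star subalgebra of bounded *uniformly continuous* complex-valued functions
inside the C*-algebra of bounded continuous functions. -/
def UCB : StarSubalgebra ℂ (X →ᵇ ℂ) where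
  carrier := {f | UniformContinuous ⇑f}
  mul_mem' := by
    intro a b ha hb
    simp only [Set.mem_setOf_eq] at *
    have hbd : Bornology.IsBounded (Set.range fun x => ((a x : ℂ), (b x : ℂ))) := by
      refine Bornology.IsBounded.subset ((a.isBounded_range).prod (b.isBounded_range)) ?_
      rintro p ⟨x, rfl⟩
      exact ⟨⟨x, rfl⟩, ⟨x, rfl⟩⟩
    set K := closure (Set.range fun x => ((a x : ℂ), (b x : ℂ))) with hK
    have hKc : IsCompact K := hbd.isCompact_closure
    haveI : CompactSpace K := isCompact_iff_compactSpace.mp hKc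
    have hmul : UniformContinuous fun p : K => (p : ℂ × ℂ).1 * (p : ℂ × ℂ).2 :=
      CompactSpace.uniformContinuous_of_continuous
        ((continuous_fst.comp continuous_subtype_val).mul
          (continuous_snd.comp continuous_subtype_val))
    have hF : UniformContinuous fun x : X => (⟨(a x, b x), subset_closure ⟨x, rfl⟩⟩ : K) :=
      (ha.prodMk hb).subtype_mk _
    have : UniformContinuous fun x : X => a x * b x := hmul.comp hF
    simp only [BoundedContinuousFunction.coe_mul]; exact this
  one_mem' := by
    simp only [Set.mem_setOf_eq, BoundedContinuousFunction.coe_one]; exact (uniformContinuous_const : UniformContinuous fun _ : X => (1 : ℂ))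
  add_mem' := by
    intro a b ha hb
    simp only [Set.mem_setOf_eq] at *
    simp only [BoundedContinuousFunction.coe_add]; exact ha.add hb
  zero_mem' := by
    simp only [Set.mem_setOf_eq, BoundedContinuousFunction.coe_zero]; exact (uniformContinuous_const : UniformContinuous fun _ : X => (0 : ℂ))
  algebraMap_mem' := by
    intro c
    have : ⇑(algebraMap ℂ (X →ᵇ ℂ) c) = fun _ : X => c := by
      ext x; simp [Algebra.algebraMap_eq_smul_one]
    simp only [Set.mem_setOf_eq, this]
    exact uniformContinuous_const
  star_mem' := by
    intro a ha
    simp only [Set.mem_setOf_eq] at *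
    have : UniformContinuous fun x : X => (starRingEnd ℂ) (a x) :=
      (Complex.isometry_conj.uniformContinuous).comp ha
    simp only [BoundedContinuousFunction.coe_star]; exact this

/-- The Samuel compactification of a metric space `X`: the character space (Gelfand spectrum)
of the algebra of bounded uniformly continuous functions, with the weak* topology. -/
def Samuel : Type _ := WeakDual.characterSpace ℂ (UCB X)

instance : TopologicalSpace (Samuel X) := by unfold Samuel; infer_instance

instance : FunLike (Samuel X) (UCB X) ℂ := by unfold Samuel; infer_instance

/-- Evaluation at a point of `X`, as a continuous linear functional on `UCB X`. -/
def samuelEvalCLM (x : X) : WeakDual ℂ (UCB X) :=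
  LinearMap.mkContinuous
    { toFun := fun f => (f : X →ᵇ ℂ) x
      map_add' := fun f g => by simp
      map_smul' := fun c f => by simp } 1
    (fun f => by rw [one_mul]; exact BoundedContinuousFunction.norm_coe_le_norm (f : X →ᵇ ℂ) x)

lemma samuelEvalCLM_apply (x : X) (f : UCB X) : samuelEvalCLM X x f = (f : X →ᵇ ℂ) x := rfl

/-- Evaluation at a point of `X`, as a character of `UCB X`:
this is the canonical embedding of `X` into its Samuel compactification. -/
def samuelEmbed (x : X) : Samuel X :=
  ⟨samuelEvalCLM X x, by
    refine ⟨fun h => ?_, fun f g => ?_⟩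
    · have h1 : samuelEvalCLM X x 1 = 0 := by rw [h]; rfl
      have h2 : samuelEvalCLM X x 1 = 1 := rfl
      rw [h1] at h2
      exact zero_ne_one h2
    · simp only [samuelEvalCLM_apply]
      simp⟩

/-- The bounded `1`-Lipschitz real-valued functions on `X`. -/
def Lip1 : Type _ := {f : X →ᵇ ℝ // LipschitzWith 1 ⇑f}

/-- A bounded `1`-Lipschitz real function, regarded as an element of `UCB X`. -/
def toUCB (f : Lip1 X) : UCB X :=
  ⟨BoundedContinuousFunction.comp Complex.ofReal
      (Complex.isometry_ofReal.lipschitz) f.1,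
   by
     have : UniformContinuous fun x : X => (f.1 x : ℂ) :=
       Complex.isometry_ofReal.uniformContinuous.comp f.2.uniformContinuous
     exact this⟩

/-- The topometric distance `∂` on the Samuel compactification:
`∂(a,b) = sup {|a(f) - b(f)| : f : X → ℝ bounded and 1-Lipschitz}`. -/
def samuelDist (a b : Samuel X) : ℝ :=
  ⨆ f : Lip1 X, ‖a (toUCB X f) - b (toUCB X f)‖

/-- The `∂`-gap between two subsets of the Samuel compactification. -/
def samuelSetDist (A B : Set (Samuel X)) : ℝ :=
  sInf {r | ∃ a ∈ A, ∃ b ∈ B, r = samuelDist X a b}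

instance : Nonempty (Lip1 X) :=
  ⟨(⟨0, by exact (LipschitzWith.const (b := (0:ℝ))).weaken zero_le_one⟩ :
      {f : X →ᵇ ℝ // LipschitzWith 1 ⇑f})⟩

set_option maxHeartbeats 1000000 in
set_option synthInstance.maxHeartbeats 1000000 in
lemma ucb_isClosed : IsClosed {f : X →ᵇ ℂ | UniformContinuous ⇑f} := by
  refine IsSeqClosed.isClosed ?_
  intro F f hF hf
  simp only [Set.mem_setOf_eq] at hF ⊢
  rw [Metric.uniformContinuous_iff]
  intro e he
  have hfu : TendstoUniformly (fun n => ⇑(F n)) (⇑f) Filter.atTop :=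
    (BoundedContinuousFunction.tendsto_iff_tendstoUniformly).mp hf
  rw [Metric.tendstoUniformly_iff] at hfu
  obtain ⟨n, hn⟩ := (hfu (e/3) (by linarith)).exists
  have hFn : UniformContinuous ⇑(F n) := hF n
  rw [Metric.uniformContinuous_iff] at hFn
  obtain ⟨d, hd, hdd⟩ := hFn (e/3) (by linarith)
  refine ⟨d, hd, fun {x y} hxy => ?_⟩
  calc dist (f x) (f y) ≤ dist (f x) (F n x) + dist (F n x) (F n y) + dist (F n y) (f y) :=
        dist_triangle4 _ _ _ _
    _ < e/3 + e/3 + e/3 := by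
        have h1' : dist (f x) (F n x) < e/3 := hn x
        have h2' : dist (F n y) (f y) < e/3 := by rw [dist_comm]; exact hn y
        have h3' := hdd hxy
        gcongr
    _ = e := by ring

instance : CompleteSpace ↥(UCB X) := (ucb_isClosed X).completeSpace_coe

lemma samuel_eval_continuous (F : ↥(UCB X)) : Continuous fun u : Samuel X => u F :=
  (WeakDual.eval_continuous F).comp continuous_subtype_val

lemma samuel_apply_add (u : Samuel X) (F G : ↥(UCB X)) : u (F + G) = u F + u G :=
  map_add (show WeakDual.characterSpace ℂ (UCB X) from u) F G

lemma samuel_apply_smul (u : Samuel X) (c : ℂ) (F : ↥(UCB X)) : u (c • F) = c * u F :=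
  map_smul (show WeakDual.characterSpace ℂ (UCB X) from u) c F

lemma samuel_apply_one (u : Samuel X) : u (1 : ↥(UCB X)) = 1 :=
  map_one (show WeakDual.characterSpace ℂ (UCB X) from u)

lemma samuel_bddAbove (x₀ : X) (D : ℝ) (hD : ∀ x y : X, dist x y ≤ D) (u v : Samuel X) :
    BddAbove (Set.range fun f : Lip1 X => ‖u (toUCB X f) - v (toUCB X f)‖) := by
  have hD0 : 0 ≤ D := le_trans dist_nonneg (hD x₀ x₀)
  set u' := WeakDual.toStrongDual
    ((show WeakDual.characterSpace ℂ (UCB X) from u : WeakDual ℂ ↥(UCB X))) with hu'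
  set v' := WeakDual.toStrongDual
    ((show WeakDual.characterSpace ℂ (UCB X) from v : WeakDual ℂ ↥(UCB X))) with hv'
  refine ⟨‖u'‖ * D + ‖v'‖ * D, ?_⟩
  rintro r ⟨f, rfl⟩
  set c : ℂ := ((f.1 x₀ : ℝ) : ℂ) with hc
  set h : ↥(UCB X) := toUCB X f - c • 1 with hh
  have hnorm : ‖h‖ ≤ D := by
    have hcoe : ‖h‖ = ‖((h : ↥(UCB X)) : X →ᵇ ℂ)‖ := rfl
    rw [hcoe]
    refine (BoundedContinuousFunction.norm_le hD0).mpr fun x => ?_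
    have hx : ((h : ↥(UCB X)) : X →ᵇ ℂ) x = ((f.1 x : ℝ) : ℂ) - c := by
      rw [hh]
      simp [toUCB, smul_eq_mul]
    rw [hx, hc]
    have hcast : ((f.1 x : ℝ) : ℂ) - ((f.1 x₀ : ℝ) : ℂ) = (((f.1 x - f.1 x₀ : ℝ)) : ℂ) := by
      push_cast; ring
    rw [hcast, Complex.norm_real, Real.norm_eq_abs, ← Real.dist_eq]
    calc dist (f.1 x) (f.1 x₀) ≤ (1 : NNReal) * dist x x₀ := f.2.dist_le_mul x x₀
      _ ≤ D := by simpa using hD x x₀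
  have happ : ∀ w : Samuel X, w (toUCB X f) = w h + c := by
    intro w
    have h1 : h + c • (1 : ↥(UCB X)) = toUCB X f := sub_add_cancel _ _
    calc w (toUCB X f) = w (h + c • 1) := by rw [h1]
      _ = w h + w (c • 1) := samuel_apply_add X w _ _
      _ = w h + c * w 1 := by rw [samuel_apply_smul X w c 1]
      _ = w h + c := by rw [samuel_apply_one X w, mul_one]
  have hsub : u (toUCB X f) - v (toUCB X f) = u h - v h := by
    rw [happ u, happ v]; ring
  show ‖u (toUCB X f) - v (toUCB X f)‖ ≤ ‖u'‖ * D + ‖v'‖ * D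
  rw [hsub]
  calc ‖u h - v h‖ ≤ ‖u h‖ + ‖v h‖ := norm_sub_le _ _
    _ ≤ ‖u'‖ * ‖h‖ + ‖v'‖ * ‖h‖ := add_le_add (u'.le_opNorm h) (v'.le_opNorm h)
    _ ≤ ‖u'‖ * D + ‖v'‖ * D := add_le_add
        (mul_le_mul_of_nonneg_left hnorm (ContinuousLinearMap.opNorm_nonneg u'))
        (mul_le_mul_of_nonneg_left hnorm (ContinuousLinearMap.opNorm_nonneg v'))

lemma samuelDist_le (u v : Samuel X) (bdd : BddAbove
    (Set.range fun f : Lip1 X => ‖u (toUCB X f) - v (toUCB X f)‖)) (g : Lip1 X) :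
    ‖u (toUCB X g) - v (toUCB X g)‖ ≤ samuelDist X u v :=
  le_ciSup bdd g

lemma samuelDist_symm (u v : Samuel X) : samuelDist X u v = samuelDist X v u := by
  unfold samuelDist
  exact iSup_congr fun f => norm_sub_rev _ _

/-- **Separation of `∂`-spread sequences by open sets.**
If `(a n)` is a sequence in the Samuel compactification of a bounded metric space `(X,d)` with
`∂(a n, a m) > δ` for all `n ≠ m`, then for every `0 < ε < δ/2` there are a subsequence
`(a (φ n))` and open sets `(U n)` with `a (φ n) ∈ U n` and `∂(U n, U m) ≥ ε` for `n ≠ m`. -/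
theorem samuel_separating_open_sets (hbdd : Bornology.IsBounded (Set.univ : Set X))
    (a : ℕ → Samuel X) (δ : ℝ) (hδ : 0 < δ)
    (hsep : ∀ n m : ℕ, n ≠ m → samuelDist X (a n) (a m) > δ)
    (ε : ℝ) (hε : 0 < ε) (hεδ : ε < δ / 2) :
    ∃ φ : ℕ → ℕ, StrictMono φ ∧
      ∃ U : ℕ → Set (Samuel X),
        (∀ n, IsOpen (U n)) ∧ (∀ n, a (φ n) ∈ U n) ∧
        ∀ n m : ℕ, n ≠ m → ε ≤ samuelSetDist X (U n) (U m) := by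
  classical
  -- X must be nonempty, otherwise `Samuel X` is empty
  rcases isEmpty_or_nonempty X with hX | hX
  · exfalso
    have h10 : (1 : ↥(UCB X)) = 0 := by
      apply Subtype.ext
      apply BoundedContinuousFunction.ext
      intro x
      exact hX.elim x
    have h1 := samuel_apply_one X (a 0)
    have h0 : (a 0) (0 : ↥(UCB X)) = 0 :=
      map_zero (show WeakDual.characterSpace ℂ (UCB X) from a 0)
    rw [h10, h0] at h1
    exact zero_ne_one h1
  obtain ⟨x₀⟩ := hX
  obtain ⟨D, hD'⟩ := Metric.isBounded_iff.mp hbdd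
  have hD : ∀ x y : X, dist x y ≤ D := fun x y =>
    hD' (Set.mem_univ x) (Set.mem_univ y)
  have bdd : ∀ u v : Samuel X,
      BddAbove (Set.range fun f : Lip1 X => ‖u (toUCB X f) - v (toUCB X f)‖) :=
    samuel_bddAbove X x₀ D hD
  set η : ℝ := (δ / 2 - ε) / 4 with hη
  have hηpos : 0 < η := by rw [hη]; linarith
  -- a cluster point of the sequence
  haveI : CompactSpace (Samuel X) := by unfold Samuel; infer_instance
  obtain ⟨b, hb⟩ : ∃ b : Samuel X, MapClusterPt b Filter.atTop a :=
    exists_clusterPt_of_compactSpace (Filter.map a Filter.atTop)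
  have hfreq : ∀ s : Set (Samuel X), IsOpen s → b ∈ s → ∀ N : ℕ, ∃ m, N ≤ m ∧ a m ∈ s := by
    intro s hs hbs N
    have h1 : ∃ᶠ n in Filter.atTop, a n ∈ s :=
      mapClusterPt_iff_frequently.mp hb s (hs.mem_nhds hbs)
    obtain ⟨m, hm1, hm2⟩ := Filter.frequently_atTop.mp h1 N
    exact ⟨m, hm1, hm2⟩
  -- all but at most one point of the sequence is `δ/2`-far from `b`
  have hgood : ∀ n m : ℕ, n ≠ m →
      (∃ g : Lip1 X, δ / 2 < ‖a n (toUCB X g) - b (toUCB X g)‖) ∨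
      (∃ g : Lip1 X, δ / 2 < ‖a m (toUCB X g) - b (toUCB X g)‖) := by
    intro n m hnm
    have h1 := hsep n m hnm
    unfold samuelDist at h1
    obtain ⟨g, hg⟩ := exists_lt_of_lt_ciSup h1
    rcases le_or_gt ‖a n (toUCB X g) - b (toUCB X g)‖ (δ / 2) with hcase | hcase
    · refine Or.inr ⟨g, ?_⟩
      have h2 : a n (toUCB X g) - a m (toUCB X g) =
          (a n (toUCB X g) - b (toUCB X g)) - (a m (toUCB X g) - b (toUCB X g)) := by ring
      rw [h2] at hg
      have h3 := norm_sub_le (a n (toUCB X g) - b (toUCB X g)) (a m (toUCB X g) - b (toUCB X g))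
      linarith
    · exact Or.inl ⟨g, hcase⟩
  -- key step for the recursion
  have hstep : ∀ (N n : ℕ) (F : ℕ → Lip1 X), ∃ (m : ℕ) (g : Lip1 X), N ≤ m ∧
      (∀ i, i < n → ‖a m (toUCB X (F i)) - b (toUCB X (F i))‖ < η) ∧
      δ / 2 < ‖a m (toUCB X g) - b (toUCB X g)‖ := by
    intro N n F
    set s : Set (Samuel X) :=
      ⋂ i ∈ Finset.range n, {u : Samuel X | ‖u (toUCB X (F i)) - b (toUCB X (F i))‖ < η} with hsdef
    have hs : IsOpen s :=
      isOpen_biInter_finset fun i _ =>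
        isOpen_lt (((samuel_eval_continuous X _).sub continuous_const).norm) continuous_const
    have hbs : b ∈ s := by
      rw [hsdef]
      refine Set.mem_iInter₂.mpr fun i _ => ?_
      simp [hηpos]
    have hins : ∀ m : ℕ, a m ∈ s →
        ∀ i, i < n → ‖a m (toUCB X (F i)) - b (toUCB X (F i))‖ < η := by
      intro m hm i hi
      exact Set.mem_iInter₂.mp hm i (Finset.mem_range.mpr hi)
    obtain ⟨m₁, hm₁N, hm₁s⟩ := hfreq s hs hbs N
    obtain ⟨m₂, hm₂N, hm₂s⟩ := hfreq s hs hbs (m₁ + 1)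
    rcases hgood m₁ m₂ (by omega) with ⟨g, hg⟩ | ⟨g, hg⟩
    · exact ⟨m₁, g, hm₁N, hins m₁ hm₁s, hg⟩
    · exact ⟨m₂, g, by omega, hins m₂ hm₂s, hg⟩
  choose M GG hM1 hM2 hM3 using hstep
  -- the recursive construction
  let junk : ℕ → Lip1 X := fun _ => Classical.arbitrary _
  let st : ℕ → ℕ × (ℕ → Lip1 X) := fun n => Nat.rec
    (M 0 0 junk, fun _ => GG 0 0 junk)
    (fun k p => (M (p.1 + 1) (k + 1) p.2,
      fun i => if i = k + 1 then GG (p.1 + 1) (k + 1) p.2 else p.2 i)) n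
  let gf : ℕ → Lip1 X := fun n => (st n).2 n
  have hstS : ∀ n : ℕ, st (n + 1) = (M ((st n).1 + 1) (n + 1) (st n).2,
      fun i => if i = n + 1 then GG ((st n).1 + 1) (n + 1) (st n).2 else (st n).2 i) :=
    fun n => rfl
  have hstable : ∀ n i, i ≤ n → (st n).2 i = gf i := by
    intro n
    induction n with
    | zero =>
      intro i hi
      have hi0 : i = 0 := by omega
      subst hi0
      rfl
    | succ k ih =>
      intro i hi
      by_cases hik : i = k + 1
      · subst hik; rfl
      · have hik' : i ≤ k := by omega
        have h1 : (st (k + 1)).2 i = (st k).2 i := by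
          rw [hstS k]; simp [hik]
        rw [h1, ih i hik']
  have hmono : StrictMono fun n => (st n).1 := by
    apply strictMono_nat_of_lt_succ
    intro n
    have h1 := hM1 ((st n).1 + 1) (n + 1) (st n).2
    have h2 : (st (n + 1)).1 = M ((st n).1 + 1) (n + 1) (st n).2 := by rw [hstS n]
    omega
  have hsepn : ∀ n : ℕ, δ / 2 < ‖a ((st n).1) (toUCB X (gf n)) - b (toUCB X (gf n))‖ := by
    intro n
    cases n with
    | zero => exact hM3 0 0 junk
    | succ k =>
      have h := hM3 ((st k).1 + 1) (k + 1) (st k).2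
      have hgk : gf (k + 1) = GG ((st k).1 + 1) (k + 1) (st k).2 := by
        show (st (k + 1)).2 (k + 1) = _
        rw [hstS k]; simp
      have hφk : (st (k + 1)).1 = M ((st k).1 + 1) (k + 1) (st k).2 := by rw [hstS k]
      rw [hgk, hφk]
      exact h
  have hclose : ∀ n m : ℕ, n < m →
      ‖a ((st m).1) (toUCB X (gf n)) - b (toUCB X (gf n))‖ < η := by
    intro n m hnm
    cases m with
    | zero => omega
    | succ k =>
      have h := hM2 ((st k).1 + 1) (k + 1) (st k).2 n (by omega)
      rw [hstable k n (by omega)] at h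
      have hφk : (st (k + 1)).1 = M ((st k).1 + 1) (k + 1) (st k).2 := by rw [hstS k]
      rw [hφk]
      exact h
  -- the open sets
  set U : ℕ → Set (Samuel X) := fun n =>
    {u : Samuel X | ‖u (toUCB X (gf n)) - a ((st n).1) (toUCB X (gf n))‖ < η} ∩
      ⋂ i ∈ Finset.range n, {u : Samuel X | ‖u (toUCB X (gf i)) - b (toUCB X (gf i))‖ < η}
    with hU
  have hUopen : ∀ n, IsOpen (U n) := by
    intro n
    refine IsOpen.inter ?_ ?_
    · exact isOpen_lt (((samuel_eval_continuous X _).sub continuous_const).norm) continuous_const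
    · exact isOpen_biInter_finset fun i _ =>
        isOpen_lt (((samuel_eval_continuous X _).sub continuous_const).norm) continuous_const
  have hUmem : ∀ n, a ((st n).1) ∈ U n := by
    intro n
    constructor
    · simp [hηpos]
    · refine Set.mem_iInter₂.mpr fun i hi => ?_
      exact hclose i n (Finset.mem_range.mp hi)
  have hkey : ∀ n m : ℕ, n < m → ∀ u ∈ U n, ∀ v ∈ U m, ε ≤ samuelDist X u v := by
    intro n m hnm u hu v hv
    obtain ⟨hu1, -⟩ := hu
    obtain ⟨-, hv2⟩ := hv
    have hv3 : ‖v (toUCB X (gf n)) - b (toUCB X (gf n))‖ < η :=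
      Set.mem_iInter₂.mp hv2 n (Finset.mem_range.mpr hnm)
    have hu1' : ‖u (toUCB X (gf n)) - a ((st n).1) (toUCB X (gf n))‖ < η := hu1
    have hsn := hsepn n
    have heq : a ((st n).1) (toUCB X (gf n)) - b (toUCB X (gf n)) =
        (a ((st n).1) (toUCB X (gf n)) - u (toUCB X (gf n))) +
        (u (toUCB X (gf n)) - v (toUCB X (gf n))) +
        (v (toUCB X (gf n)) - b (toUCB X (gf n))) := by ring
    have htri : ‖a ((st n).1) (toUCB X (gf n)) - b (toUCB X (gf n))‖ ≤
        ‖a ((st n).1) (toUCB X (gf n)) - u (toUCB X (gf n))‖ +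
        ‖u (toUCB X (gf n)) - v (toUCB X (gf n))‖ +
        ‖v (toUCB X (gf n)) - b (toUCB X (gf n))‖ := by
      rw [heq]; exact norm_add₃_le
    have hrev : ‖a ((st n).1) (toUCB X (gf n)) - u (toUCB X (gf n))‖ =
        ‖u (toUCB X (gf n)) - a ((st n).1) (toUCB X (gf n))‖ := norm_sub_rev _ _
    have hle : ‖u (toUCB X (gf n)) - v (toUCB X (gf n))‖ ≤ samuelDist X u v :=
      samuelDist_le X u v (bdd u v) (gf n)
    rw [hη] at hηpos
    have hη4 : η = (δ / 2 - ε) / 4 := hη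
    linarith
  refine ⟨fun n => (st n).1, hmono, U, hUopen, hUmem, ?_⟩
  intro n m hnm
  unfold samuelSetDist
  refine le_csInf ⟨samuelDist X (a ((st n).1)) (a ((st m).1)),
    a ((st n).1), hUmem n, a ((st m).1), hUmem m, rfl⟩ ?_
  rintro r ⟨u, hu, v, hv, rfl⟩
  rcases lt_or_gt_of_ne hnm with h | h
  · exact hkey n m h u hu v hv
  · rw [samuelDist_symm X u v]
    exact hkey m n h v hv u hu
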